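/- Let U, V ∈ ℂ ∖ {0}, γ ∈ ℂ, and r ≥ 0. If |U − γ/V| ≤ r and |V − γ/U| ≤ r, then min{|U|, |V|} ≤ √|γ| + r. -/

import Mathlib

/-- Any simultaneous solution of the two resonance inequalities has one
coordinate of modulus at most `√|γ| + r`. -/
theorem stmt8 (U V γ : ℂ) (r : ℝ) (hr : 0 ≤ r) (hU : U ≠ 0) (hV : V ≠ 0)
    (h1 : ‖U - γ / V‖ ≤ r) (h2 : ‖V - γ / U‖ ≤ r) :
    min (‖U‖) (‖V‖) ≤ Real.sqrt (‖γ‖) + r := by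
  by_contra h
  push_neg at h
  have hUgt : Real.sqrt (‖γ‖) + r < ‖U‖ := lt_of_lt_of_le h (min_le_left _ _)
  have hVgt : Real.sqrt (‖γ‖) + r < ‖V‖ := lt_of_lt_of_le h (min_le_right _ _)
  have hs : 0 ≤ Real.sqrt (‖γ‖) := Real.sqrt_nonneg _
  -- From h1: |U| ≤ |γ|/|V| + r
  have key : ‖U‖ ≤ ‖γ‖ / ‖V‖ + r := by
    have := norm_sub_le U (γ / V)  -- maybe not
    calc ‖U‖ = ‖(U - γ / V) + γ / V‖ := by ring_nf
      _ ≤ ‖U - γ / V‖ + ‖γ / V‖ := norm_add_le _ _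
      _ ≤ r + ‖γ‖ / ‖V‖ := by rw [norm_div]; linarith
      _ = ‖γ‖ / ‖V‖ + r := by ring
  have hVpos : (0:ℝ) < ‖V‖ := norm_pos_iff.mpr hV
  have h2' : (‖U‖ - r) * ‖V‖ ≤ ‖γ‖ := by
    rw [sub_mul]
    have : ‖U‖ * ‖V‖ ≤ (‖γ‖ / ‖V‖ + r) * ‖V‖ :=
      mul_le_mul_of_nonneg_right key hVpos.le
    rw [add_mul, div_mul_cancel₀] at this
    · linarith
    · exact hVpos.ne'
  have h3 : ‖γ‖ < (‖U‖ - r) * ‖V‖ := by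
    have h4 : Real.sqrt (‖γ‖) < ‖U‖ - r := by linarith
    have h5 : Real.sqrt (‖γ‖) < ‖V‖ := by linarith
    calc ‖γ‖ = Real.sqrt (‖γ‖) * Real.sqrt (‖γ‖) := by
          rw [Real.mul_self_sqrt (by positivity)]
      _ < (‖U‖ - r) * ‖V‖ := by
          apply mul_lt_mul' h4.le h5 hs (by linarith)
  linarith
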